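/- Let α > 2 and set the SINR threshold β = 3^α. There exists a constant C depending only on α such that: for every finite set S of links in the Euclidean plane that is feasible (P-feasible for some power assignment P, with threshold 3^α), every link i ∈ S satisfies Σ_{j ∈ S, j ≠ i, l_j ≤ l_i} min{1, l_j^α / d(i,j)^α} ≤ C. -/

import Mathlib

noncomputable section

open scoped BigOperators

open scoped ENNReal

abbrev Pt : Type := EuclideanSpace ℝ (Fin 2)

instance : DecidableEq Pt := Classical.decEq _

abbrev Link : Type := Pt × Pt

def len (i : Link) : ℝ := dist i.1 i.2

def dd (i j : Link) : ℝ :=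
  min (min (dist i.1 j.1) (dist i.1 j.2)) (min (dist i.2 j.1) (dist i.2 j.2))

def PFeasible (α β : ℝ) (S : Finset Link) (P : Link → ℝ) : Prop :=
  (∀ i ∈ S, 0 < P i) ∧
  ∀ i ∈ S, β * ∑ j ∈ S.erase i, P j / dist j.1 i.2 ^ α ≤ P i / len i ^ α

def Feasible (α β : ℝ) (S : Finset Link) : Prop := ∃ P, PFeasible α β S P

def oblPower (α τ : ℝ) : Link → ℝ := fun i => len i ^ (τ * α)

def linkDiversity (S : Finset Link) : ℝ :=
  if h : S.Nonempty then S.sup' h len / S.inf' h len else 1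

def logStar (x : ℝ) : ℕ := sInf {k : ℕ | (Real.logb 2)^[k] x ≤ 1}

def IsSpanningTreeLinks (R : Finset Pt) (S : Finset Link) : Prop :=
  (∀ i ∈ S, i.1 ∈ R ∧ i.2 ∈ R ∧ i.1 ≠ i.2) ∧
  S.card + 1 = R.card ∧
  (SimpleGraph.fromRel fun x y : {p : Pt // p ∈ R} => ((x : Pt), (y : Pt)) ∈ S).Connected

def IsMSTLinks (R : Finset Pt) (S : Finset Link) : Prop :=
  IsSpanningTreeLinks R S ∧
  ∀ S' : Finset Link, IsSpanningTreeLinks R S' → ∑ i ∈ S, len i ≤ ∑ i ∈ S', len i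

def emb (t : ℝ) : Pt := (WithLp.equiv 2 (Fin 2 → ℝ)).symm ![t, 0]

def NodeDisjoint (i j : Link) : Prop :=
  i.1 ≠ j.1 ∧ i.1 ≠ j.2 ∧ i.2 ≠ j.1 ∧ i.2 ≠ j.2

def ptDiversity (R : Finset ℝ) : ℝ :=
  if h : R.offDiag.Nonempty then
    (R.offDiag.sup' h fun p => |p.1 - p.2|) / (R.offDiag.inf' h fun p => |p.1 - p.2|)
  else 1

def G1 (T : Finset Link) : SimpleGraph {i : Link // i ∈ T} :=
  SimpleGraph.fromRel fun i j => dd ↑i ↑j ≤ min (len ↑i) (len ↑j)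

lemma dd_nonneg (i j : Link) : 0 ≤ dd i j := by
  unfold dd; positivity

lemma dd_le_u (i j : Link) : dd i j ≤ dist j.1 i.2 := by
  rw [dist_comm]
  exact le_trans (min_le_right _ _) (min_le_left _ _)

lemma dd_le_v (i j : Link) : dd i j ≤ dist i.1 j.2 :=
  le_trans (min_le_left _ _) (min_le_right _ _)

lemma dd_eq_cases (i j : Link) :
    dd i j = dist i.1 j.1 ∨ dd i j = dist i.1 j.2 ∨
    dd i j = dist i.2 j.1 ∨ dd i j = dist i.2 j.2 := by
  unfold dd
  rcases min_cases (dist i.1 j.1) (dist i.1 j.2) with ⟨h1, -⟩ | ⟨h1, -⟩ <;>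
    rcases min_cases (min (dist i.1 j.1) (dist i.1 j.2))
      (min (dist i.2 j.1) (dist i.2 j.2)) with ⟨h3, -⟩ | ⟨h3, -⟩ <;>
    rcases min_cases (dist i.2 j.1) (dist i.2 j.2) with ⟨h2, -⟩ | ⟨h2, -⟩ <;>
    rw [h3] <;> simp [h1, h2]

lemma uA (i j : Link) :
    dist j.1 i.2 ≤ dd i j + len j ∨ dist i.1 j.2 ≤ dd i j + len j := by
  have T3 := dist_triangle j.1 j.2 i.2
  have T4 := dist_triangle i.1 j.1 j.2
  have E3 := dist_comm j.2 i.2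
  have E4 := dist_comm j.1 i.2
  have hn : (0:ℝ) ≤ dist j.1 j.2 := dist_nonneg
  rcases dd_eq_cases i j with h|h|h|h
  · right; rw [h]; unfold len; linarith
  · right; rw [h]; unfold len; linarith
  · left; rw [h]; unfold len; linarith
  · left; rw [h]; unfold len; linarith

lemma uB (i j : Link) : dist j.1 i.2 ≤ dd i j + len i + len j := by
  have T1 := dist_triangle j.1 i.1 i.2
  have T2 := dist_triangle j.1 j.2 i.1
  have T3 := dist_triangle j.1 j.2 i.2
  have E1 := dist_comm j.1 i.1
  have E2 := dist_comm j.2 i.1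
  have E3 := dist_comm j.2 i.2
  have E4 := dist_comm j.1 i.2
  have hn : (0:ℝ) ≤ dist j.1 j.2 := dist_nonneg
  have hn2 : (0:ℝ) ≤ dist i.1 i.2 := dist_nonneg
  rcases dd_eq_cases i j with h|h|h|h <;> rw [h] <;> unfold len <;> linarith

lemma uC (i j : Link) : dist i.1 j.2 ≤ dd i j + len i + len j := by
  have T4 := dist_triangle i.1 j.1 j.2
  have T5 := dist_triangle i.1 i.2 j.2
  have T6 := dist_triangle i.1 i.2 j.1
  have hn : (0:ℝ) ≤ dist j.1 j.2 := dist_nonneg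
  have hn2 : (0:ℝ) ≤ dist i.1 i.2 := dist_nonneg
  rcases dd_eq_cases i j with h|h|h|h <;> rw [h] <;> unfold len <;> linarith

lemma recv_bound (i j : Link) : dist j.2 i.2 ≤ dd i j + len i + 2 * len j := by
  have h := uB i j
  have T := dist_triangle j.2 j.1 i.2
  have E := dist_comm j.2 j.1
  unfold len at *
  linarith

lemma rpow_pow (x : ℝ) (hx : 0 ≤ x) (n : ℕ) (z : ℝ) : (x ^ n) ^ z = (x ^ z) ^ n := by
  rw [← Real.rpow_natCast x n, ← Real.rpow_natCast (x ^ z) n, ← Real.rpow_mul hx,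
    ← Real.rpow_mul hx, mul_comm]

lemma dyadic {x : ℝ} (hx : 1 ≤ x) :
    (2:ℝ) ^ (⌊Real.logb 2 x⌋₊) ≤ x ∧ x < 2 ^ (⌊Real.logb 2 x⌋₊ + 1) := by
  set t := Real.logb 2 x with ht
  have ht0 : 0 ≤ t := Real.logb_nonneg (by norm_num) hx
  have h1 : (⌊t⌋₊ : ℝ) ≤ t := Nat.floor_le ht0
  have h2 : t < ⌊t⌋₊ + 1 := Nat.lt_floor_add_one t
  have hx0 : (0:ℝ) < x := by linarith
  have hlogb : (2:ℝ) ^ t = x := Real.rpow_logb (by norm_num) (by norm_num) hx0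
  constructor
  · calc (2:ℝ) ^ (⌊t⌋₊ : ℕ) = (2:ℝ) ^ ((⌊t⌋₊ : ℕ) : ℝ) := (Real.rpow_natCast _ _).symm
      _ ≤ (2:ℝ) ^ t := Real.rpow_le_rpow_of_exponent_le (by norm_num) h1
      _ = x := hlogb
  · calc x = (2:ℝ) ^ t := hlogb.symm
      _ < (2:ℝ) ^ (((⌊t⌋₊ + 1 : ℕ)) : ℝ) := by
          apply Real.rpow_lt_rpow_of_exponent_lt (by norm_num)
          push_cast; linarith
      _ = (2:ℝ) ^ (⌊t⌋₊ + 1 : ℕ) := Real.rpow_natCast _ _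

open MeasureTheory in
lemma packing_card (P : Finset Pt) (c : Pt) {L R : ℝ} (hL : 0 < L)
    (hin : ∀ p ∈ P, dist p c ≤ R)
    (hsep : ∀ p ∈ P, ∀ q ∈ P, p ≠ q → L ≤ dist p q) :
    (P.card : ℝ) ≤ ((2 * R + L) / L) ^ 2 := by
  rcases P.eq_empty_or_nonempty with rfl | ⟨p0, hp0⟩
  · simp; positivity
  have hR : 0 ≤ R := le_trans dist_nonneg (hin p0 hp0)
  set ε : ℝ := L / 2 with hε
  have hε0 : 0 < ε := by positivity
  have hdisj : (↑P : Set Pt).PairwiseDisjoint (fun p => Metric.ball p ε) := by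
    intro p hp q hq hpq
    exact Metric.ball_disjoint_ball (by
      have := hsep p (by simpa using hp) q (by simpa using hq) hpq
      linarith)
  have hmeas : volume (⋃ p ∈ P, Metric.ball p ε) = ∑ p ∈ P, volume (Metric.ball p ε) :=
    measure_biUnion_finset hdisj (fun p _ => measurableSet_ball)
  have hball : ∀ p : Pt, volume (Metric.ball p ε) =
      ENNReal.ofReal (ε ^ 2) * volume (Metric.ball (0 : Pt) 1) := by
    intro p
    rw [Measure.addHaar_ball volume p hε0.le, finrank_euclideanSpace_fin]
  have hsub : (⋃ p ∈ P, Metric.ball p ε) ⊆ Metric.ball c (R + ε) := by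
    intro y hy
    simp only [Set.mem_iUnion] at hy
    obtain ⟨p, hp, hyp⟩ := hy
    rw [Metric.mem_ball] at hyp ⊢
    calc dist y c ≤ dist y p + dist p c := dist_triangle _ _ _
      _ < ε + R := by have := hin p hp; linarith
      _ = R + ε := by ring
  have hballc : volume (Metric.ball c (R + ε)) =
      ENNReal.ofReal ((R + ε) ^ 2) * volume (Metric.ball (0 : Pt) 1) := by
    rw [Measure.addHaar_ball volume c (by positivity), finrank_euclideanSpace_fin]
  have hVpos : volume (Metric.ball (0 : Pt) 1) ≠ 0 :=
    (Metric.measure_ball_pos volume _ one_pos).ne'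
  have hVtop : volume (Metric.ball (0 : Pt) 1) ≠ ⊤ :=
    (MeasureTheory.measure_ball_lt_top).ne
  have key : (P.card : ℝ≥0∞) * ENNReal.ofReal (ε ^ 2) ≤ ENNReal.ofReal ((R + ε) ^ 2) := by
    have h1 : (P.card : ℝ≥0∞) * ENNReal.ofReal (ε ^ 2) * volume (Metric.ball (0 : Pt) 1)
        ≤ ENNReal.ofReal ((R + ε) ^ 2) * volume (Metric.ball (0 : Pt) 1) := by
      calc (P.card : ℝ≥0∞) * ENNReal.ofReal (ε ^ 2) * volume (Metric.ball (0 : Pt) 1)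
          = ∑ p ∈ P, volume (Metric.ball p ε) := by
            rw [Finset.sum_congr rfl (fun p _ => hball p), Finset.sum_const, nsmul_eq_mul,
              mul_assoc]
        _ = volume (⋃ p ∈ P, Metric.ball p ε) := hmeas.symm
        _ ≤ volume (Metric.ball c (R + ε)) := measure_mono hsub
        _ = _ := hballc
    exact (ENNReal.mul_le_mul_iff_left hVpos hVtop).mp h1
  have key2 : (P.card : ℝ) * ε ^ 2 ≤ (R + ε) ^ 2 := by
    have := ENNReal.toReal_mono (by finiteness) key
    rw [ENNReal.toReal_mul, ENNReal.toReal_ofReal (by positivity),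
      ENNReal.toReal_ofReal (by positivity), ENNReal.toReal_natCast] at this
    exact this
  have hfin : ((2 * R + L) / L) ^ 2 = (R + ε) ^ 2 / ε ^ 2 := by
    rw [hε]; field_simp
  rw [hfin, le_div_iff₀ (by positivity)]
  exact key2

section SINR

variable {α β : ℝ} {S : Finset Link} {P : Link → ℝ}

lemma sinr_single (hβ : 0 < β) (hP : PFeasible α β S P) {i j : Link}
    (hi : i ∈ S) (hj : j ∈ S) (hij : j ≠ i) :
    β * (P j / dist j.1 i.2 ^ α) ≤ P i / len i ^ α := by
  obtain ⟨hpos, hsinr⟩ := hP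
  refine le_trans ?_ (hsinr i hi)
  apply mul_le_mul_of_nonneg_left _ hβ.le
  exact Finset.single_le_sum
    (fun k hk => div_nonneg (hpos k (Finset.mem_of_mem_erase hk)).le
      (Real.rpow_nonneg dist_nonneg α))
    (Finset.mem_erase.2 ⟨hij, hj⟩)

lemma sinr_cross (hβ : 0 < β) (hP : PFeasible α β S P) {i j : Link}
    (hi : i ∈ S) (hj : j ∈ S) (hij : j ≠ i) (hlen : 0 < len i)
    (hu : 0 < dist j.1 i.2) :
    β * (len i ^ α * P j) ≤ P i * dist j.1 i.2 ^ α := by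
  have h := sinr_single hβ hP hi hj hij
  have hu' : 0 < dist j.1 i.2 ^ α := Real.rpow_pos_of_pos hu α
  have hl' : 0 < len i ^ α := Real.rpow_pos_of_pos hlen α
  rw [mul_div_assoc' β (P j) _, div_le_div_iff₀ hu' hl'] at h
  nlinarith [h]

lemma sinr_prod_sep (hα : 0 < α) (hP : PFeasible α ((3:ℝ) ^ α) S P) {i j : Link}
    (hi : i ∈ S) (hj : j ∈ S) (hij : i ≠ j)
    (h1 : 0 < len i) (h2 : 0 < len j)
    (hu : 0 < dist j.1 i.2) (hv : 0 < dist i.1 j.2) :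
    9 * (len i * len j) ≤ dist j.1 i.2 * dist i.1 j.2 := by
  have hβ : (0:ℝ) < (3:ℝ) ^ α := Real.rpow_pos_of_pos (by norm_num) α
  have hpos := hP.1
  have hPi := hpos i hi
  have hPj := hpos j hj
  have A := sinr_cross hβ hP hi hj (Ne.symm hij) h1 hu
  have B := sinr_cross hβ hP hj hi hij h2 hv
  -- multiply A and B
  have hAB : ((3:ℝ) ^ α) ^ 2 * (len i ^ α * len j ^ α) * (P i * P j)
      ≤ (P i * P j) * (dist j.1 i.2 ^ α * dist i.1 j.2 ^ α) := by
    have hA0 : 0 ≤ (3:ℝ) ^ α * (len i ^ α * P j) := by positivity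
    have hB0 : 0 ≤ (3:ℝ) ^ α * (len j ^ α * P i) := by positivity
    nlinarith [mul_le_mul A B hB0 (by positivity : (0:ℝ) ≤ P i * dist j.1 i.2 ^ α)]
  have hcancel : ((3:ℝ) ^ α) ^ 2 * (len i ^ α * len j ^ α)
      ≤ dist j.1 i.2 ^ α * dist i.1 j.2 ^ α := by
    have hPP : 0 < P i * P j := mul_pos hPi hPj
    nlinarith [hAB, hPP]
  have hrw : ((3:ℝ) ^ α) ^ 2 * (len i ^ α * len j ^ α)
      = (9 * (len i * len j)) ^ α := by
    rw [sq]
    rw [← Real.mul_rpow (by norm_num : (0:ℝ) ≤ 3) (by norm_num : (0:ℝ) ≤ 3)]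
    rw [← Real.mul_rpow h1.le h2.le]
    rw [← Real.mul_rpow (by norm_num : (0:ℝ) ≤ 3*3) (by positivity : (0:ℝ) ≤ len i * len j)]
    norm_num
  have hrw2 : dist j.1 i.2 ^ α * dist i.1 j.2 ^ α
      = (dist j.1 i.2 * dist i.1 j.2) ^ α := by
    rw [← Real.mul_rpow dist_nonneg dist_nonneg]
  rw [hrw, hrw2] at hcancel
  by_contra hcon
  push_neg at hcon
  have := Real.rpow_lt_rpow (by positivity) hcon hα
  linarith

lemma sinr_key_sum (hα : 0 < α) (hP : PFeasible α ((3:ℝ) ^ α) S P)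
    (hS : ∀ j ∈ S, j.1 ≠ j.2) {i : Link} (hi : i ∈ S) :
    ((3:ℝ) ^ α) ^ 2 *
      ∑ j ∈ (S.erase i).filter (fun j => 0 < dd i j),
        len i ^ α * len j ^ α / (dist i.1 j.2 ^ α * dist j.1 i.2 ^ α) ≤ 1 := by
  have hβ : (0:ℝ) < (3:ℝ) ^ α := Real.rpow_pos_of_pos (by norm_num) α
  set β := (3:ℝ) ^ α with hβdef
  have hpos := hP.1
  have hPi := hpos i hi
  have hli : 0 < len i := dist_pos.2 (hS i hi)
  have hlia : 0 < len i ^ α := Real.rpow_pos_of_pos hli α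
  -- per-term bound
  have hterm : ∀ j ∈ (S.erase i).filter (fun j => 0 < dd i j),
      β ^ 2 * (len i ^ α * len j ^ α / (dist i.1 j.2 ^ α * dist j.1 i.2 ^ α))
        ≤ (β * len i ^ α / P i) * (P j / dist j.1 i.2 ^ α) := by
    intro j hjmem
    rw [Finset.mem_filter, Finset.mem_erase] at hjmem
    obtain ⟨⟨hji, hjS⟩, hddp⟩ := hjmem
    have hlj : 0 < len j := dist_pos.2 (hS j hjS)
    have hv : 0 < dist i.1 j.2 := lt_of_lt_of_le hddp (dd_le_v i j)
    have hu : 0 < dist j.1 i.2 := lt_of_lt_of_le hddp (dd_le_u i j)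
    have hva : 0 < dist i.1 j.2 ^ α := Real.rpow_pos_of_pos hv α
    have hua : 0 < dist j.1 i.2 ^ α := Real.rpow_pos_of_pos hu α
    have hlja : 0 < len j ^ α := Real.rpow_pos_of_pos hlj α
    -- cross at link j with interferer i : β * len j ^ α * P i ≤ P j * dist i.1 j.2 ^ α
    have hcross := sinr_cross hβ hP hjS hi (Ne.symm hji) hlj hv
    have hfrac : β ^ 2 * (len i ^ α * len j ^ α) / (dist i.1 j.2 ^ α * dist j.1 i.2 ^ α)
        ≤ β * len i ^ α * P j / (P i * dist j.1 i.2 ^ α) := by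
      rw [div_le_div_iff₀ (by positivity) (by positivity)]
      nlinarith [mul_le_mul_of_nonneg_left hcross
        (by positivity : (0:ℝ) ≤ β * len i ^ α * dist j.1 i.2 ^ α), hPi, hua, hva, hlia, hlja]
    calc β ^ 2 * (len i ^ α * len j ^ α / (dist i.1 j.2 ^ α * dist j.1 i.2 ^ α))
        = β ^ 2 * (len i ^ α * len j ^ α) / (dist i.1 j.2 ^ α * dist j.1 i.2 ^ α) := by ring
      _ ≤ β * len i ^ α * P j / (P i * dist j.1 i.2 ^ α) := hfrac
      _ = β * len i ^ α / P i * (P j / dist j.1 i.2 ^ α) := by ring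
  calc β ^ 2 * ∑ j ∈ (S.erase i).filter (fun j => 0 < dd i j),
        len i ^ α * len j ^ α / (dist i.1 j.2 ^ α * dist j.1 i.2 ^ α)
      = ∑ j ∈ (S.erase i).filter (fun j => 0 < dd i j),
        β ^ 2 * (len i ^ α * len j ^ α / (dist i.1 j.2 ^ α * dist j.1 i.2 ^ α)) := by
        rw [Finset.mul_sum]
    _ ≤ ∑ j ∈ (S.erase i).filter (fun j => 0 < dd i j),
        (β * len i ^ α / P i) * (P j / dist j.1 i.2 ^ α) := Finset.sum_le_sum hterm
    _ = (β * len i ^ α / P i) * ∑ j ∈ (S.erase i).filter (fun j => 0 < dd i j),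
        P j / dist j.1 i.2 ^ α := by rw [Finset.mul_sum]
    _ ≤ (β * len i ^ α / P i) * ∑ j ∈ S.erase i, P j / dist j.1 i.2 ^ α := by
        apply mul_le_mul_of_nonneg_left _ (by positivity)
        apply Finset.sum_le_sum_of_subset_of_nonneg (Finset.filter_subset _ _)
        intro j hj _
        exact div_nonneg (hpos j (Finset.mem_of_mem_erase hj)).le
          (Real.rpow_nonneg dist_nonneg α)
    _ ≤ 1 := by
        have h := hP.2 i hi
        have h3 : β * len i ^ α / P i * ∑ j ∈ S.erase i, P j / dist j.1 i.2 ^ α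
            = (len i ^ α / P i) * (β * ∑ j ∈ S.erase i, P j / dist j.1 i.2 ^ α) := by ring
        have h4 : (len i ^ α / P i) * (β * ∑ j ∈ S.erase i, P j / dist j.1 i.2 ^ α)
            ≤ (len i ^ α / P i) * (P i / len i ^ α) :=
          mul_le_mul_of_nonneg_left h (by positivity)
        have h5 : (len i ^ α / P i) * (P i / len i ^ α) = 1 := by field_simp
        rw [h3]
        linarith
end SINR


set_option maxHeartbeats 2000000

/-- (Necessary condition for feasibility, threshold `β = 3^α`.)
In any feasible set, the total capped interference on a link from the not-longer links is
bounded by a constant depending only on `α`. -/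
theorem feasible_implies_bounded_in_interference (α : ℝ) (hα : 2 < α) :
    ∃ C : ℝ, ∀ S : Finset Link, (∀ i ∈ S, i.1 ≠ i.2) →
      Feasible α (3 ^ α) S →
      ∀ i ∈ S,
        ∑ j ∈ S.filter (fun j => j ≠ i ∧ len j ≤ len i),
          min 1 (len j ^ α / dd i j ^ α) ≤ C := by
  classical
  have hα0 : (0:ℝ) < α := by linarith
  set r : ℝ := (2:ℝ)⁻¹ ^ α with hrdef
  have hr0 : 0 < r := Real.rpow_pos_of_pos (by norm_num) α
  have hr4 : r < 1/4 := by
    have h1 : ((2:ℝ)⁻¹) ^ α < ((2:ℝ)⁻¹) ^ (2:ℝ) :=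
      Real.rpow_lt_rpow_of_exponent_gt (by norm_num) (by norm_num) hα
    have h2 : ((2:ℝ)⁻¹) ^ (2:ℝ) = 1/4 := by
      rw [show (2:ℝ) = ((2:ℕ):ℝ) by norm_num, Real.rpow_natCast]
      norm_num
    rw [hrdef]
    linarith
  set q : ℝ := 4 * r with hqdef
  have hq0 : 0 ≤ q := by positivity
  have hq1 : q < 1 := by rw [hqdef]; linarith
  have hsumq : Summable (fun n : ℕ => q ^ n) := summable_geometric_of_lt_one hq0 hq1
  have hsummable : Summable (fun p : ℕ × ℕ => q ^ p.1 * q ^ p.2) := by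
    apply summable_mul_of_summable_norm (f := fun n : ℕ => q ^ n) (g := fun n : ℕ => q ^ n) <;>
    · refine hsumq.congr fun n => ?_
      rw [Real.norm_of_nonneg (by positivity)]
  refine ⟨(6:ℝ) ^ α + 4096 * ∑' p : ℕ × ℕ, q ^ p.1 * q ^ p.2, ?_⟩
  intro S hS hfeas i hi
  obtain ⟨P, hP⟩ := hfeas
  have hli : 0 < len i := dist_pos.2 (hS i hi)
  set w : Link → ℝ := fun j => min 1 (len j ^ α / dd i j ^ α) with hwdef
  have hw0 : ∀ j, 0 ≤ w j := by
    intro j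
    exact le_min zero_le_one
      (div_nonneg (Real.rpow_nonneg dist_nonneg α) (Real.rpow_nonneg (dd_nonneg i j) α))
  set T : Finset Link := S.filter (fun j => j ≠ i ∧ len j ≤ len i) with hTdef
  -- split into near and far parts
  have e1 : ∑ j ∈ T, w j
      = ∑ j ∈ T.filter (fun j => dd i j ≤ len i), w j
        + ∑ j ∈ T.filter (fun j => ¬ dd i j ≤ len i), w j :=
    (Finset.sum_filter_add_sum_filter_not T _ w).symm
  -- the near part
  set F : Finset Link := (S.erase i).filter (fun j => 0 < dd i j) with hFdef
  have htnn : ∀ j ∈ F,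
      0 ≤ len i ^ α * len j ^ α / (dist i.1 j.2 ^ α * dist j.1 i.2 ^ α) := by
    intro j _
    apply div_nonneg
    · exact mul_nonneg (Real.rpow_nonneg dist_nonneg α) (Real.rpow_nonneg dist_nonneg α)
    · exact mul_nonneg (Real.rpow_nonneg dist_nonneg α) (Real.rpow_nonneg dist_nonneg α)
  have hFle : ∑ j ∈ F, len i ^ α * len j ^ α / (dist i.1 j.2 ^ α * dist j.1 i.2 ^ α) ≤ 1 := by
    have hkey := sinr_key_sum hα0 hP hS hi
    have h9 : (1:ℝ) ≤ ((3:ℝ) ^ α) ^ 2 := by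
      have : (1:ℝ) ≤ (3:ℝ) ^ α := by
        have := Real.rpow_le_rpow_of_exponent_le (by norm_num : (1:ℝ) ≤ 3) hα0.le
        rwa [Real.rpow_zero] at this
      nlinarith
    have hsnn : 0 ≤ ∑ j ∈ F, len i ^ α * len j ^ α / (dist i.1 j.2 ^ α * dist j.1 i.2 ^ α) :=
      Finset.sum_nonneg htnn
    nlinarith [hkey, hsnn]
  have hnear : ∑ j ∈ T.filter (fun j => dd i j ≤ len i), w j ≤ (6:ℝ) ^ α := by
    have e2 : ∑ j ∈ T.filter (fun j => dd i j ≤ len i), w j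
        = ∑ j ∈ (T.filter (fun j => dd i j ≤ len i)).filter (fun j => dd i j = 0), w j
          + ∑ j ∈ (T.filter (fun j => dd i j ≤ len i)).filter (fun j => ¬ dd i j = 0), w j :=
      (Finset.sum_filter_add_sum_filter_not _ _ w).symm
    have ezero : ∑ j ∈ (T.filter (fun j => dd i j ≤ len i)).filter (fun j => dd i j = 0), w j
        = 0 := by
      apply Finset.sum_eq_zero
      intro j hj
      rw [Finset.mem_filter] at hj
      show min 1 (len j ^ α / dd i j ^ α) = 0
      rw [hj.2, Real.zero_rpow hα0.ne', div_zero]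
      exact min_eq_right zero_le_one
    set N : Finset Link := (T.filter (fun j => dd i j ≤ len i)).filter (fun j => ¬ dd i j = 0)
      with hNdef
    have hNF : N ⊆ F := by
      intro j hj
      rw [hNdef, Finset.mem_filter, Finset.mem_filter, hTdef, Finset.mem_filter] at hj
      obtain ⟨⟨⟨hjS, hjne, -⟩, -⟩, hj0⟩ := hj
      rw [hFdef, Finset.mem_filter]
      exact ⟨Finset.mem_erase.2 ⟨hjne, hjS⟩, lt_of_le_of_ne (dd_nonneg i j) (Ne.symm hj0)⟩
    have hNbound : ∀ j ∈ N, w j ≤ (6:ℝ) ^ α *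
        (len i ^ α * len j ^ α / (dist i.1 j.2 ^ α * dist j.1 i.2 ^ α)) := by
      intro j hj
      have hjmem := hj
      rw [hNdef, Finset.mem_filter, Finset.mem_filter, hTdef, Finset.mem_filter] at hjmem
      obtain ⟨⟨⟨hjS, hjne, hjlen⟩, hDle⟩, hj0⟩ := hjmem
      have hlj : 0 < len j := dist_pos.2 (hS j hjS)
      have hD : 0 < dd i j := lt_of_le_of_ne (dd_nonneg i j) (Ne.symm hj0)
      set D := dd i j with hDdef
      set M := max D (len j) with hMdef
      have hM : 0 < M := lt_of_lt_of_le hD (le_max_left _ _)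
      have hDM : D ≤ M := le_max_left _ _
      have hlM : len j ≤ M := le_max_right _ _
      have hMli : M ≤ len i := max_le hDle hjlen
      have hu : 0 < dist j.1 i.2 := lt_of_lt_of_le hD (dd_le_u i j)
      have hv : 0 < dist i.1 j.2 := lt_of_lt_of_le hD (dd_le_v i j)
      have huB := uB i j
      have huC := uC i j
      have huv : dist i.1 j.2 * dist j.1 i.2 ≤ 6 * (M * len i) := by
        rcases uA i j with h | h
        · have h1 : dist j.1 i.2 ≤ 2 * M := by linarith
          have h2 : dist i.1 j.2 ≤ 3 * len i := by linarith
          nlinarith [hu.le, hv.le]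
        · have h1 : dist i.1 j.2 ≤ 2 * M := by linarith
          have h2 : dist j.1 i.2 ≤ 3 * len i := by linarith
          nlinarith [hu.le, hv.le]
      -- lower bound for the key term
      have hda : dist i.1 j.2 ^ α * dist j.1 i.2 ^ α ≤ (6 * (M * len i)) ^ α := by
        rw [← Real.mul_rpow dist_nonneg dist_nonneg]
        exact Real.rpow_le_rpow (by positivity) huv hα0.le
      have hterm : (len j / (6 * M)) ^ α
          ≤ len i ^ α * len j ^ α / (dist i.1 j.2 ^ α * dist j.1 i.2 ^ α) := by
        have e3 : len i ^ α * len j ^ α = (len i * len j) ^ α :=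
          (Real.mul_rpow hli.le hlj.le).symm
        have e4 : (len j / (6 * M)) ^ α = (len i * len j) ^ α / (6 * (M * len i)) ^ α := by
          rw [← Real.div_rpow (by positivity) (by positivity)]
          congr 1
          field_simp
        rw [e3, e4]
        apply div_le_div_of_nonneg_left (by positivity) _ hda
        positivity
      have hw1 : w j ≤ (len j / M) ^ α := by
        rcases le_total D (len j) with hcase | hcase
        · have hMeq : M = len j := max_eq_right hcase
          have : (len j / M) ^ α = 1 := by
            rw [hMeq, div_self hlj.ne', Real.one_rpow]
          rw [this]
          exact min_le_left _ _
        · have hMeq : M = D := max_eq_left hcase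
          have : (len j / M) ^ α = len j ^ α / D ^ α := by
            rw [hMeq, Real.div_rpow hlj.le hD.le]
          rw [this]
          exact min_le_right _ _
      have hw2 : (len j / M) ^ α = (6:ℝ) ^ α * (len j / (6 * M)) ^ α := by
        rw [← Real.mul_rpow (by norm_num) (by positivity)]
        congr 1
        field_simp
      calc w j ≤ (len j / M) ^ α := hw1
        _ = (6:ℝ) ^ α * (len j / (6 * M)) ^ α := hw2
        _ ≤ (6:ℝ) ^ α * (len i ^ α * len j ^ α / (dist i.1 j.2 ^ α * dist j.1 i.2 ^ α)) :=
            mul_le_mul_of_nonneg_left hterm (by positivity)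
    calc ∑ j ∈ T.filter (fun j => dd i j ≤ len i), w j
        = ∑ j ∈ N, w j := by rw [e2, ezero, zero_add]
      _ ≤ ∑ j ∈ N, (6:ℝ) ^ α *
            (len i ^ α * len j ^ α / (dist i.1 j.2 ^ α * dist j.1 i.2 ^ α)) :=
          Finset.sum_le_sum hNbound
      _ = (6:ℝ) ^ α * ∑ j ∈ N,
            len i ^ α * len j ^ α / (dist i.1 j.2 ^ α * dist j.1 i.2 ^ α) := by
          rw [Finset.mul_sum]
      _ ≤ (6:ℝ) ^ α * ∑ j ∈ F,
            len i ^ α * len j ^ α / (dist i.1 j.2 ^ α * dist j.1 i.2 ^ α) := by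
          apply mul_le_mul_of_nonneg_left _ (by positivity)
          exact Finset.sum_le_sum_of_subset_of_nonneg hNF (fun j hj _ => htnn j hj)
      _ ≤ (6:ℝ) ^ α * 1 := mul_le_mul_of_nonneg_left hFle (by positivity)
      _ = (6:ℝ) ^ α := mul_one _
  -- the far part
  set Far : Finset Link := T.filter (fun j => ¬ dd i j ≤ len i) with hFardef
  set f : Link → ℕ × ℕ := fun j =>
    (⌊Real.logb 2 (dd i j / len i)⌋₊, ⌊Real.logb 2 (len i / len j)⌋₊) with hfdef
  -- basic dyadic facts for far links
  have hfarfacts : ∀ j ∈ Far,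
      j ∈ S ∧ j ≠ i ∧ 0 < len j ∧ len j ≤ len i ∧
      (2:ℝ) ^ (f j).1 * len i ≤ dd i j ∧ dd i j < 2 ^ ((f j).1 + 1) * len i ∧
      len i / 2 ^ ((f j).2 + 1) < len j ∧ len j ≤ len i / 2 ^ (f j).2 ∧
      len i < dd i j := by
    intro j hj
    rw [hFardef, Finset.mem_filter, hTdef, Finset.mem_filter] at hj
    obtain ⟨⟨hjS, hjne, hjlen⟩, hDgt⟩ := hj
    push_neg at hDgt
    have hlj : 0 < len j := dist_pos.2 (hS j hjS)
    have hx1 : 1 ≤ dd i j / len i := by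
      rw [le_div_iff₀ hli]; linarith
    have hx2 : 1 ≤ len i / len j := by
      rw [le_div_iff₀ hlj]; linarith
    obtain ⟨hk1, hk2⟩ := dyadic hx1
    obtain ⟨hm1, hm2⟩ := dyadic hx2
    refine ⟨hjS, hjne, hlj, hjlen, ?_, ?_, ?_, ?_, hDgt⟩
    · calc (2:ℝ) ^ (f j).1 * len i ≤ (dd i j / len i) * len i :=
          mul_le_mul_of_nonneg_right hk1 hli.le
        _ = dd i j := by field_simp
    · calc dd i j = (dd i j / len i) * len i := by field_simp
        _ < 2 ^ ((f j).1 + 1) * len i := mul_lt_mul_of_pos_right hk2 hli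
    · rw [div_lt_iff₀ (by positivity)]
      calc len i = (len i / len j) * len j := by field_simp
        _ < 2 ^ ((f j).2 + 1) * len j := mul_lt_mul_of_pos_right hm2 hlj
        _ = len j * 2 ^ ((f j).2 + 1) := by ring
    · rw [le_div_iff₀ (by positivity : (0:ℝ) < (2:ℝ) ^ (f j).2)]
      calc len j * 2 ^ (f j).2 ≤ len j * (len i / len j) :=
          mul_le_mul_of_nonneg_left hm1 hlj.le
        _ = len i := by field_simp
  -- per-link weight bound in a fiber
  have hwfar : ∀ j ∈ Far, w j ≤ r ^ ((f j).1 + (f j).2) := by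
    intro j hj
    obtain ⟨hjS, hjne, hlj, hjlen, hk1, hk2, hm1, hm2, hDgt⟩ := hfarfacts j hj
    have hD : 0 < dd i j := lt_trans hli hDgt
    have hratio : len j / dd i j ≤ (2:ℝ)⁻¹ ^ ((f j).1 + (f j).2) := by
      have h1 : len j / dd i j ≤ (len i / 2 ^ (f j).2) / (2 ^ (f j).1 * len i) := by
        apply div_le_div₀ (by positivity) hm2 (by positivity) hk1
      have h2 : (len i / 2 ^ (f j).2) / ((2:ℝ) ^ (f j).1 * len i)
          = (2:ℝ)⁻¹ ^ ((f j).1 + (f j).2) := by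
        rw [inv_pow, pow_add]
        field_simp
      linarith
    calc w j ≤ len j ^ α / dd i j ^ α := min_le_right _ _
      _ = (len j / dd i j) ^ α := (Real.div_rpow hlj.le hD.le _).symm
      _ ≤ ((2:ℝ)⁻¹ ^ ((f j).1 + (f j).2)) ^ α :=
          Real.rpow_le_rpow (by positivity) hratio hα0.le
      _ = r ^ ((f j).1 + (f j).2) := by
          rw [rpow_pow _ (by norm_num) _ α, hrdef]
  -- cardinality of each fiber
  have hcard : ∀ p : ℕ × ℕ,
      ((Far.filter (fun j => f j = p)).card : ℝ) ≤ 4 ^ (p.1 + p.2 + 6) := by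
    intro p
    set G : Finset Link := Far.filter (fun j => f j = p) with hGdef
    set L : ℝ := len i / 2 ^ (p.2 + 1) with hLdef
    set R : ℝ := 2 ^ (p.1 + 3) * len i with hRdef
    have hL : 0 < L := by positivity
    have hGfacts : ∀ j ∈ G, L < len j ∧ len j ≤ 2 * L ∧ dist j.2 i.2 ≤ R ∧ j ∈ S := by
      intro j hj
      rw [hGdef, Finset.mem_filter] at hj
      obtain ⟨hjFar, hjf⟩ := hj
      obtain ⟨hjS, hjne, hlj, hjlen, hk1, hk2, hm1, hm2, hDgt⟩ := hfarfacts j hjFar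
      rw [hjf] at hk1 hk2 hm1 hm2
      refine ⟨hm1, ?_, ?_, hjS⟩
      · have : len i / 2 ^ p.2 = 2 * L := by
          rw [hLdef, pow_succ]
          field_simp
        linarith
      · have hrecv := recv_bound i j
        have hpk : (1:ℝ) ≤ 2 ^ (p.1 + 1) := one_le_pow₀ (by norm_num)
        have e5 : (2:ℝ) ^ (p.1 + 3) = 2 ^ (p.1 + 1) * 4 := by
          rw [show p.1 + 3 = (p.1 + 1) + 2 from by omega, pow_add]
          norm_num
        rw [hRdef, e5]
        nlinarith [hrecv, hk2, hjlen, hli.le]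
    -- receivers are L-separated
    have hsep2 : ∀ j ∈ G, ∀ j' ∈ G, j ≠ j' → L ≤ dist j.2 j'.2 := by
      intro j hj j' hj' hne
      obtain ⟨hLj, hj2L, -, hjS⟩ := hGfacts j hj
      obtain ⟨hLj', hj2L', -, hj'S⟩ := hGfacts j' hj'
      have hlj : 0 < len j := lt_trans hL hLj
      have hlj' : 0 < len j' := lt_trans hL hLj'
      rcases eq_or_lt_of_le (dist_nonneg : (0:ℝ) ≤ dist j'.1 j.2) with hu0 | hu
      · have heq : j'.1 = j.2 := dist_eq_zero.1 hu0.symm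
        have : dist j.2 j'.2 = len j' := by rw [← heq]; rfl
        linarith
      rcases eq_or_lt_of_le (dist_nonneg : (0:ℝ) ≤ dist j.1 j'.2) with hv0 | hv
      · have heq : j.1 = j'.2 := dist_eq_zero.1 hv0.symm
        have : dist j.2 j'.2 = len j := by
          rw [← heq, dist_comm]; rfl
        linarith
      have hprod := sinr_prod_sep hα0 hP hjS hj'S hne hlj hlj' hu hv
      have h9 : 9 * L * L < dist j'.1 j.2 * dist j.1 j'.2 := by nlinarith
      have hor : 3 * L < dist j'.1 j.2 ∨ 3 * L < dist j.1 j'.2 := by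
        by_contra hcon
        push_neg at hcon
        nlinarith [hcon.1, hcon.2, hu.le, hv.le]
      rcases hor with h | h
      · have htri : dist j'.1 j.2 ≤ len j' + dist j.2 j'.2 := by
          have := dist_triangle j'.1 j'.2 j.2
          have e := dist_comm j'.2 j.2
          unfold len
          linarith
        linarith
      · have htri : dist j.1 j'.2 ≤ len j + dist j.2 j'.2 := by
          have := dist_triangle j.1 j.2 j'.2
          unfold len
          linarith
        linarith
    have hinj : Set.InjOn Prod.snd (G : Set Link) := by
      intro j hj j' hj' heq
      by_contra hne
      have := hsep2 j (by simpa using hj) j' (by simpa using hj') hne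
      rw [heq] at this
      simp at this
      linarith
    have hcardeq : (G.image Prod.snd).card = G.card := Finset.card_image_of_injOn hinj
    have hpack : ((G.image Prod.snd).card : ℝ) ≤ ((2 * R + L) / L) ^ 2 := by
      apply packing_card (G.image Prod.snd) i.2 hL
      · intro pt hpt
        rw [Finset.mem_image] at hpt
        obtain ⟨j, hj, rfl⟩ := hpt
        exact (hGfacts j hj).2.2.1
      · intro pt hpt pt' hpt' hne
        rw [Finset.mem_image] at hpt hpt'
        obtain ⟨j, hj, rfl⟩ := hpt
        obtain ⟨j', hj', rfl⟩ := hpt'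
        exact hsep2 j hj j' hj' (fun h => hne (by rw [h]))
    have hratio2 : (2 * R + L) / L ≤ 2 ^ (p.1 + p.2 + 6) := by
      rw [div_le_iff₀ hL]
      have e6 : (2:ℝ) ^ (p.1 + p.2 + 6) * L = 2 ^ (p.1 + 5) * len i := by
        rw [hLdef]
        have : (2:ℝ) ^ (p.1 + p.2 + 6) = 2 ^ (p.1 + 5) * 2 ^ (p.2 + 1) := by
          rw [← pow_add]; congr 1; omega
        rw [this]
        field_simp
      rw [e6]
      have hLli : L ≤ len i := by
        rw [hLdef]
        apply div_le_self hli.le (one_le_pow₀ (by norm_num))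
      have e7 : (2:ℝ) ^ (p.1 + 5) = 4 * 2 ^ (p.1 + 3) := by
        rw [show p.1 + 5 = 2 + (p.1 + 3) from by omega, pow_add]
        norm_num
      have hp3 : (1:ℝ) ≤ 2 ^ (p.1 + 3) := one_le_pow₀ (by norm_num)
      rw [hRdef, e7]
      nlinarith [hli.le]
    have hfinal : ((2 * R + L) / L) ^ 2 ≤ 4 ^ (p.1 + p.2 + 6) := by
      have h0 : (0:ℝ) ≤ (2 * R + L) / L := by positivity
      have := pow_le_pow_left₀ h0 hratio2 2
      have e8 : ((2:ℝ) ^ (p.1 + p.2 + 6)) ^ 2 = 4 ^ (p.1 + p.2 + 6) := by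
        rw [← pow_mul, show (p.1 + p.2 + 6) * 2 = 2 * (p.1 + p.2 + 6) from by ring, pow_mul]
        norm_num
      linarith [this, e8.le, e8.ge]
    calc (G.card : ℝ) = ((G.image Prod.snd).card : ℝ) := by rw [hcardeq]
      _ ≤ ((2 * R + L) / L) ^ 2 := hpack
      _ ≤ 4 ^ (p.1 + p.2 + 6) := hfinal
  -- sum over far links
  have hfar : ∑ j ∈ Far, w j ≤ 4096 * ∑' p : ℕ × ℕ, q ^ p.1 * q ^ p.2 := by
    have hfib : ∑ j ∈ Far, w j
        = ∑ p ∈ Far.image f, ∑ j ∈ Far.filter (fun j => f j = p), w j :=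
      (Finset.sum_fiberwise_of_maps_to (fun j hj => Finset.mem_image_of_mem f hj) w).symm
    have hfiber : ∀ p ∈ Far.image f,
        ∑ j ∈ Far.filter (fun j => f j = p), w j ≤ 4096 * (q ^ p.1 * q ^ p.2) := by
      intro p _
      have hb : ∀ j ∈ Far.filter (fun j => f j = p), w j ≤ r ^ (p.1 + p.2) := by
        intro j hj
        rw [Finset.mem_filter] at hj
        have := hwfar j hj.1
        rw [hj.2] at this
        exact this
      calc ∑ j ∈ Far.filter (fun j => f j = p), w j
          ≤ (Far.filter (fun j => f j = p)).card • (r ^ (p.1 + p.2)) :=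
            Finset.sum_le_card_nsmul _ _ _ hb
        _ = ((Far.filter (fun j => f j = p)).card : ℝ) * r ^ (p.1 + p.2) := by
            rw [nsmul_eq_mul]
        _ ≤ 4 ^ (p.1 + p.2 + 6) * r ^ (p.1 + p.2) := by
            apply mul_le_mul_of_nonneg_right (hcard p) (by positivity)
        _ = 4096 * (q ^ p.1 * q ^ p.2) := by
            rw [hqdef, mul_pow, mul_pow, pow_add, pow_add, pow_add]
            norm_num
            ring
    calc ∑ j ∈ Far, w j
        = ∑ p ∈ Far.image f, ∑ j ∈ Far.filter (fun j => f j = p), w j := hfib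
      _ ≤ ∑ p ∈ Far.image f, 4096 * (q ^ p.1 * q ^ p.2) := Finset.sum_le_sum hfiber
      _ = 4096 * ∑ p ∈ Far.image f, q ^ p.1 * q ^ p.2 := by rw [Finset.mul_sum]
      _ ≤ 4096 * ∑' p : ℕ × ℕ, q ^ p.1 * q ^ p.2 := by
          apply mul_le_mul_of_nonneg_left _ (by norm_num)
          exact sum_le_hasSum _ (fun p _ => by positivity) hsummable.hasSum
  calc ∑ j ∈ S.filter (fun j => j ≠ i ∧ len j ≤ len i), min 1 (len j ^ α / dd i j ^ α)
      = ∑ j ∈ T, w j := rfl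
    _ = ∑ j ∈ T.filter (fun j => dd i j ≤ len i), w j
        + ∑ j ∈ T.filter (fun j => ¬ dd i j ≤ len i), w j := e1
    _ ≤ (6:ℝ) ^ α + 4096 * ∑' p : ℕ × ℕ, q ^ p.1 * q ^ p.2 := add_le_add hnear hfar
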